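/- Let 1 ≤ r ≤ n, let a_1 < … < a_r be integers with i ≤ a_i ≤ n, and set w = (s_{a_1} ⋯ s_1)(s_{a_2} ⋯ s_2) ⋯ (s_{a_r} ⋯ s_r) in S_{n+1}. Suppose there exists 2 ≤ j ≤ r with a_j − a_{j−1} ≥ 2, and let j₂ be the least such j; set w₁ = (s_{a_1} ⋯ s_1) ⋯ (s_{a_{j₂−1}} ⋯ s_{j₂−1}). Then, with the A_n root conventions α_j = e_j − e_{j+1}, one has w₁^{−1}(α_{a_1}) = −Σ_{i=1}^{a_{j₂−1}} α_i and w^{−1}(α_{a_1}) = −Σ_{i=1}^{a_{j₂−1} + r + 1 − j₂} α_i; in particular w₁^{−1}(α_{a_1}) − w^{−1}(α_{a_1}) is a nonzero nonnegative integral combination of simple roots. -/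

import Mathlib

/-- The adjacent transposition `s j = (j, j+1)`, realized inside `Equiv.Perm ℕ`. -/
def adjTrans (j : ℕ) : Equiv.Perm ℕ := Equiv.swap j (j + 1)

/-- The product `s_a s_{a-1} ⋯ s_b` with decreasing indices from `a` down to `b`. -/
def decProd (b a : ℕ) : Equiv.Perm ℕ :=
  ((List.range' b (a + 1 - b)).reverse.map adjTrans).prod

/-- The standard basis vector `e p`. -/
def e (p : ℕ) : ℕ → ℤ := fun q => if q = p then 1 else 0

/-- The simple root `α j = e j - e (j+1)` of type `A`. -/
def α (j : ℕ) : ℕ → ℤ := fun q => e j q - e (j + 1) q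

/-- The action of a permutation on vectors, permuting the standard basis:
`act σ (e p) = e (σ p)`. -/
def act (σ : Equiv.Perm ℕ) (v : ℕ → ℤ) : ℕ → ℤ := fun q => v (σ⁻¹ q)


lemma decProd_of_gt {b a : ℕ} (h : a < b) : decProd b a = 1 := by
  unfold decProd
  have : a + 1 - b = 0 := by omega
  simp [this]

lemma decProd_rec {b a : ℕ} (h : b ≤ a) :
    decProd b a = decProd (b + 1) a * adjTrans b := by
  unfold decProd
  have h1 : a + 1 - b = (a - b) + 1 := by omega
  have h2 : a + 1 - (b + 1) = a - b := by omega
  rw [h1, h2, List.range'_succ]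
  simp

lemma adjTrans_apply (j x : ℕ) :
    adjTrans j x = if x = j then j + 1 else if x = j + 1 then j else x := by
  unfold adjTrans
  rcases eq_or_ne x j with rfl | h1
  · simp
  · rcases eq_or_ne x (j+1) with rfl | h2
    · simp [Equiv.swap_apply_right]
    · simp [Equiv.swap_apply_of_ne_of_ne h1 h2, h1, h2]

lemma decProd_fix_lt : ∀ d b a x, a + 1 = b + d → x < b → decProd b a x = x := by
  intro d
  induction d with
  | zero => intro b a x h hx; rw [decProd_of_gt (by omega)]; rfl
  | succ d ih =>
    intro b a x h hx
    rw [decProd_rec (by omega)]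
    have hfix : adjTrans b x = x := by rw [adjTrans_apply]; split <;> [omega; (split <;> omega)]
    rw [Equiv.Perm.mul_apply, hfix]
    exact ih (b+1) a x (by omega) (by omega)

lemma decProd_fix_gt : ∀ d b a x, a + 1 = b + d → a + 1 < x → decProd b a x = x := by
  intro d
  induction d with
  | zero => intro b a x h hx; rw [decProd_of_gt (by omega)]; rfl
  | succ d ih =>
    intro b a x h hx
    rw [decProd_rec (by omega)]
    have hfix : adjTrans b x = x := by rw [adjTrans_apply]; split <;> [omega; (split <;> omega)]
    rw [Equiv.Perm.mul_apply, hfix]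
    exact ih (b+1) a x (by omega) (by omega)

lemma decProd_apply_base : ∀ d b a, a + 1 = b + d → b ≤ a + 1 → decProd b a b = a + 1 := by
  intro d
  induction d with
  | zero => intro b a h hb; rw [decProd_of_gt (by omega)]; simp; omega
  | succ d ih =>
    intro b a h hb
    rw [decProd_rec (by omega)]
    have hs : adjTrans b b = b + 1 := by rw [adjTrans_apply]; simp
    rw [Equiv.Perm.mul_apply, hs]
    exact ih (b+1) a (by omega) (by omega)

lemma decProd_apply_mid : ∀ d b a x, a + 1 = b + d → b ≤ x → x ≤ a → decProd b a (x + 1) = x := by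
  intro d
  induction d with
  | zero => intro b a x h h1 h2; omega
  | succ d ih =>
    intro b a x h h1 h2
    rw [decProd_rec (by omega)]
    rcases eq_or_ne x b with rfl | hne
    · have hs : adjTrans x (x + 1) = x := by rw [adjTrans_apply]; simp
      rw [Equiv.Perm.mul_apply, hs]
      exact decProd_fix_lt d (x+1) a x (by omega) (by omega)
    · have hs : adjTrans b (x + 1) = x + 1 := by
        rw [adjTrans_apply]; split <;> [omega; (split <;> omega)]
      rw [Equiv.Perm.mul_apply, hs]
      exact ih (b+1) a x (by omega) (by omega) h2

lemma decProd_inv_top {b a : ℕ} (h : b ≤ a + 1) : (decProd b a)⁻¹ (a + 1) = b := by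
  conv_lhs => rw [← decProd_apply_base (a + 1 - b) b a (by omega) h]
  simp

lemma decProd_inv_mid {b a x : ℕ} (h1 : b ≤ x) (h2 : x ≤ a) : (decProd b a)⁻¹ x = x + 1 := by
  conv_lhs => rw [← decProd_apply_mid (a + 1 - b) b a x (by omega) h1 h2]
  simp

lemma decProd_inv_lt {b a x : ℕ} (hx : x < b) : (decProd b a)⁻¹ x = x := by
  rcases le_or_gt b (a + 1) with h | h
  · conv_lhs => rw [← decProd_fix_lt (a + 1 - b) b a x (by omega) hx]
    simp
  · rw [decProd_of_gt (by omega)]; rfl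

lemma decProd_inv_gt {b a x : ℕ} (hx : a + 1 < x) : (decProd b a)⁻¹ x = x := by
  rcases le_or_gt b (a + 1) with h | h
  · conv_lhs => rw [← decProd_fix_gt (a + 1 - b) b a x (by omega) hx]
    simp
  · rw [decProd_of_gt (by omega)]; rfl

def Wprod (a : ℕ → ℕ) (k : ℕ) : Equiv.Perm ℕ :=
  ((List.range' 1 k).map (fun i => decProd i (a i))).prod

lemma Wprod_succ (a : ℕ → ℕ) (k : ℕ) :
    Wprod a (k + 1) = Wprod a k * decProd (k + 1) (a (k + 1)) := by
  unfold Wprod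
  rw [show k + 1 = k + 1 from rfl, List.range'_concat]
  simp [Nat.add_comm 1 k]

lemma claimA (a : ℕ → ℕ) : ∀ k, 1 ≤ k → (Wprod a k)⁻¹ (a 1 + 1) = 1 := by
  intro k hk
  induction k, hk using Nat.le_induction with
  | base =>
    have h : Wprod a 1 = decProd 1 (a 1) := by simp [Wprod, List.range']
    rw [h, decProd_inv_top (by omega)]
  | succ k hk ih =>
    rw [Wprod_succ, mul_inv_rev, Equiv.Perm.mul_apply, ih]
    exact decProd_inv_lt (by omega)

lemma claimB (a : ℕ → ℕ) (m : ℕ)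
    (hconsec' : ∀ t, 1 ≤ t → t < m → a (t + 1) = a t + 1)
    (hbnd : ∀ k, 1 ≤ k → k ≤ m → k ≤ a k) :
    ∀ k, 1 ≤ k → k ≤ m → (Wprod a k)⁻¹ (a 1) = a k + 1 := by
  intro k hk
  induction k, hk using Nat.le_induction with
  | base =>
    intro h1m
    have h : Wprod a 1 = decProd 1 (a 1) := by simp [Wprod, List.range']
    rw [h, decProd_inv_mid (hbnd 1 le_rfl h1m) le_rfl]
  | succ k hk ih =>
    intro hkm
    have hak : a (k + 1) = a k + 1 := hconsec' k hk (by omega)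
    have hka : k ≤ a k := hbnd k hk (by omega)
    rw [Wprod_succ, mul_inv_rev, Equiv.Perm.mul_apply, ih (by omega),
      decProd_inv_mid (by omega) (by omega), hak]

lemma claimC (a : ℕ → ℕ) (r p : ℕ) (hpa : p ≤ a p)
    (hgrow : ∀ k, p < k → k ≤ r → a p + 2 + (k - (p + 1)) ≤ a k)
    (base : (Wprod a p)⁻¹ (a 1) = a p + 1) :
    ∀ d, p + d ≤ r → (Wprod a (p + d))⁻¹ (a 1) = a p + 1 + d := by
  intro d
  induction d with
  | zero => intro _; simpa using base
  | succ d ih =>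
    intro h
    have ihv := ih (by omega)
    rw [show p + (d + 1) = (p + d) + 1 from rfl, Wprod_succ, mul_inv_rev,
      Equiv.Perm.mul_apply, ihv]
    have hk := hgrow (p + d + 1) (by omega) (by omega)
    have hk' : a p + 2 + d ≤ a (p + d + 1) := by
      have hd : p + d + 1 - (p + 1) = d := by omega
      omega
    rw [decProd_inv_mid (by omega) (by omega)]
    omega

lemma mono_add (a : ℕ → ℕ) (r : ℕ) (hmono : ∀ i, 1 ≤ i → i < r → a i < a (i + 1)) :
    ∀ k m, 1 ≤ k → k ≤ m → m ≤ r → a k + (m - k) ≤ a m := by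
  intro k m hk hkm
  induction m, hkm using Nat.le_induction with
  | base => intro _; simp
  | succ m hm ih =>
    intro hmr
    have h1 := hmono m (by omega) (by omega)
    have h2 := ih (by omega)
    omega

lemma sum_alpha (m : ℕ) : (∑ i ∈ Finset.Icc 1 m, α i) = fun q => e 1 q - e (m + 1) q := by
  induction m with
  | zero =>
    rw [Finset.Icc_eq_empty (by omega), Finset.sum_empty]
    funext q; simp
  | succ m ih =>
    rw [Finset.sum_Icc_succ_top (by omega), ih]
    funext q
    simp only [Pi.add_apply, α]
    ring

lemma act_inv_alpha (σ : Equiv.Perm ℕ) (p : ℕ) :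
    act σ⁻¹ (α p) = fun q => e (σ⁻¹ p) q - e (σ⁻¹ (p + 1)) q := by
  funext q
  simp only [act, inv_inv, α, e]
  have h1 : (σ q = p) ↔ (q = σ⁻¹ p) := ⟨fun h => by simp [← h], fun h => by simp [h]⟩
  have h2 : (σ q = p + 1) ↔ (q = σ⁻¹ (p + 1)) := ⟨fun h => by simp [← h], fun h => by simp [h]⟩
  rw [if_congr h1 rfl rfl, if_congr h2 rfl rfl]

theorem stmt8 (n r j₂ : ℕ) (a : ℕ → ℕ)
    (h1 : 1 ≤ r) (h2 : r ≤ n)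
    (hmono : ∀ i, 1 ≤ i → i < r → a i < a (i + 1))
    (hb : ∀ i, 1 ≤ i → i ≤ r → i ≤ a i ∧ a i ≤ n)
    (hj1 : 2 ≤ j₂) (hj2 : j₂ ≤ r)
    (hgap : a (j₂ - 1) + 2 ≤ a j₂)
    (hleast : ∀ j, 2 ≤ j → j < j₂ → a j < a (j - 1) + 2)
    (hconsec : ∀ t, 1 ≤ t → t ≤ j₂ - 2 → a (t + 1) = a t + 1) :
    act (((List.range' 1 (j₂ - 1)).map (fun i => decProd i (a i))).prod)⁻¹ (α (a 1))
        = -(∑ i ∈ Finset.Icc 1 (a (j₂ - 1)), α i) ∧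
    act (((List.range' 1 r).map (fun i => decProd i (a i))).prod)⁻¹ (α (a 1))
        = -(∑ i ∈ Finset.Icc 1 (a (j₂ - 1) + r + 1 - j₂), α i) ∧
    ∃ c : ℕ → ℕ,
      (act (((List.range' 1 (j₂ - 1)).map (fun i => decProd i (a i))).prod)⁻¹ (α (a 1))
          - act (((List.range' 1 r).map (fun i => decProd i (a i))).prod)⁻¹ (α (a 1))
        = ∑ i ∈ Finset.Icc 1 n, (c i : ℤ) • α i) ∧
      ∃ i, i ∈ Finset.Icc 1 n ∧ c i ≠ 0 := by
  set P := a (j₂ - 1) with hP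
  set M := a (j₂ - 1) + r + 1 - j₂ with hM
  have hW1 : ((List.range' 1 (j₂ - 1)).map (fun i => decProd i (a i))).prod = Wprod a (j₂ - 1) := rfl
  have hW2 : ((List.range' 1 r).map (fun i => decProd i (a i))).prod = Wprod a r := rfl
  have hPj : j₂ - 1 ≤ P := (hb (j₂ - 1) (by omega) (by omega)).1
  have hA1 : (Wprod a (j₂ - 1))⁻¹ (a 1 + 1) = 1 := claimA a (j₂ - 1) (by omega)
  have hA2 : (Wprod a r)⁻¹ (a 1 + 1) = 1 := claimA a r h1
  have hB : (Wprod a (j₂ - 1))⁻¹ (a 1) = P + 1 := by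
    refine claimB a (j₂ - 1) (fun t ht1 ht2 => hconsec t ht1 (by omega))
      (fun k hk1 hk2 => (hb k hk1 (by omega)).1) (j₂ - 1) (by omega) le_rfl
  have hmadd := mono_add a r hmono
  have hgrow : ∀ k, j₂ - 1 < k → k ≤ r → P + 2 + (k - (j₂ - 1 + 1)) ≤ a k := by
    intro k hk1 hk2
    have h := hmadd j₂ k (by omega) (by omega) hk2
    omega
  have hC : (Wprod a r)⁻¹ (a 1) = M + 1 := by
    have h := claimC a r (j₂ - 1) hPj hgrow hB (r - (j₂ - 1)) (by omega)
    rw [show j₂ - 1 + (r - (j₂ - 1)) = r by omega] at h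
    rw [h]; omega
  have hMn : M + 1 ≤ n := by
    have h := hmadd j₂ r (by omega) hj2 le_rfl
    have h2 := (hb r h1 le_rfl).2
    omega
  have hPM : P + 1 ≤ M := by omega
  have part1 : act (((List.range' 1 (j₂ - 1)).map (fun i => decProd i (a i))).prod)⁻¹ (α (a 1))
      = -(∑ i ∈ Finset.Icc 1 P, α i) := by
    rw [hW1, act_inv_alpha, sum_alpha, hB, hA1]
    funext q
    simp only [Pi.neg_apply]
    ring
  have part2 : act (((List.range' 1 r).map (fun i => decProd i (a i))).prod)⁻¹ (α (a 1))
      = -(∑ i ∈ Finset.Icc 1 M, α i) := by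
    rw [hW2, act_inv_alpha, sum_alpha, hC, hA2]
    funext q
    simp only [Pi.neg_apply]
    ring
  refine ⟨part1, part2, fun i => if P + 1 ≤ i ∧ i ≤ M then 1 else 0, ?_, P + 1, ?_, ?_⟩
  · rw [part1, part2]
    simp only [Nat.cast_ite, Nat.cast_one, Nat.cast_zero, ite_smul, one_smul, zero_smul]
    rw [← Finset.sum_filter]
    have hfil : (Finset.Icc 1 n).filter (fun i => P + 1 ≤ i ∧ i ≤ M) = Finset.Ioc P M := by
      ext i
      simp only [Finset.mem_filter, Finset.mem_Icc, Finset.mem_Ioc]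
      omega
    rw [hfil]
    have hsum := Finset.sum_Ioc_consecutive α (Nat.zero_le P) (show P ≤ M by omega)
    rw [show Finset.Icc 1 M = Finset.Ioc 0 M from rfl, show Finset.Icc 1 P = Finset.Ioc 0 P from rfl,
      ← hsum]
    abel
  · simp only [Finset.mem_Icc]; omega
  · have hcond : P + 1 ≤ P + 1 ∧ P + 1 ≤ M := ⟨le_rfl, hPM⟩
    simp [hcond]
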